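/- Let X be a random vector, X^{(-j)} its j-th-component-removed version, and X_{π_j} the vector X with j-th component replaced by an independent copy of X^{(j)}. Then m(X) and m(X_{π_j}) are independent conditionally on X^{(-j)}, and consequently E[(m(X) - m(X_{π_j}))^2] = E[Var(m(X) | X^{(-j)})] + E[Var(m(X_{π_j}) | X^{(-j)})] + E[(E[m(X)|X^{(-j)}] - E[m(X_{π_j})|X^{(-j)}])^2]. -/

import Mathlib

open MeasureTheory ProbabilityTheory
open scoped ENNReal NNReal

noncomputable section

/-- The σ-algebra generated by the components of `X` other than the `j`-th. -/
def sigmaWithout {Ω : Type*} [MeasurableSpace Ω] {p : ℕ} (X : Ω → Fin p → ℝ) (j : Fin p) :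
    MeasurableSpace Ω :=
  MeasurableSpace.comap (fun ω => fun k : {k : Fin p // k ≠ j} => X ω (k : Fin p)) inferInstance

/-- `X_{π_j}` : the vector `X` with its `j`-th component replaced by `X'`. -/
def permuted {Ω : Type*} {p : ℕ} (X : Ω → Fin p → ℝ) (j : Fin p) (X' : Ω → ℝ) :
    Ω → Fin p → ℝ :=
  fun ω => Function.update (X ω) j (X' ω)

/-- combine a vector indexed by `{k // k ≠ j}` with a value at `j`. -/
def comb {p : ℕ} (j : Fin p) (z : {k : Fin p // k ≠ j} → ℝ) (y : ℝ) : Fin p → ℝ :=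
  fun k => if h : k = j then y else z ⟨k, h⟩

lemma measurable_comb {p : ℕ} (j : Fin p) :
    Measurable (fun q : ({k : Fin p // k ≠ j} → ℝ) × ℝ => comb j q.1 q.2) := by
  apply measurable_pi_lambda
  intro k
  by_cases hk : k = j
  · simpa [comb, hk] using measurable_snd
  · simpa [comb, hk, Function.comp_def] using (measurable_pi_apply (⟨k, hk⟩ : {k : Fin p // k ≠ j})).comp measurable_fst

lemma comb_restr {p : ℕ} (j : Fin p) (x : Fin p → ℝ) (y : ℝ) :
    comb j (fun k : {k : Fin p // k ≠ j} => x (k : Fin p)) y = Function.update x j y := by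
  funext k
  by_cases hk : k = j
  · subst hk; simp [comb]
  · simp [comb, hk, Function.update_apply]

/-- law of total expectation for a function of the independent pair `(X, X')`. -/
lemma calc_aux {Ω : Type*} [MeasureSpace Ω] [IsProbabilityMeasure (ℙ : Measure Ω)]
    {p : ℕ} (X : Ω → Fin p → ℝ) (X' : Ω → ℝ)
    (hX : Measurable X) (hX' : Measurable X') (hindep : IndepFun X' X ℙ)
    (h : (Fin p → ℝ) → ℝ → ℝ) (hh : Measurable (fun q : (Fin p → ℝ) × ℝ => h q.1 q.2))
    (C : ℝ) (hC : ∀ x y, |h x y| ≤ C) :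
    ∫ ω, h (X ω) (X' ω) ∂ℙ = ∫ ω, (∫ y, h (X ω) y ∂(Measure.map X' ℙ)) ∂ℙ := by
  have hXX' : Measure.map (fun ω => (X ω, X' ω)) ℙ
      = (Measure.map X ℙ).prod (Measure.map X' ℙ) :=
    (indepFun_iff_map_prod_eq_prod_map_map hX.aemeasurable hX'.aemeasurable).mp hindep.symm
  haveI : IsProbabilityMeasure (Measure.map X ℙ) := Measure.isProbabilityMeasure_map hX.aemeasurable
  haveI : IsProbabilityMeasure (Measure.map X' ℙ) := Measure.isProbabilityMeasure_map hX'.aemeasurable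
  have hint : Integrable (fun q : (Fin p → ℝ) × ℝ => h q.1 q.2)
      ((Measure.map X ℙ).prod (Measure.map X' ℙ)) := by
    refine Integrable.mono' (integrable_const C) hh.aestronglyMeasurable ?_
    exact ae_of_all _ fun q => by simpa [Real.norm_eq_abs] using hC q.1 q.2
  have hsm : StronglyMeasurable (fun x => ∫ y, h x y ∂(Measure.map X' ℙ)) :=
    hh.stronglyMeasurable.integral_prod_right'
  calc ∫ ω, h (X ω) (X' ω) ∂ℙ
      = ∫ q, h q.1 q.2 ∂(Measure.map (fun ω => (X ω, X' ω)) ℙ) := by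
        rw [integral_map (hX.prodMk hX').aemeasurable hh.aestronglyMeasurable]
    _ = ∫ x, ∫ y, h x y ∂(Measure.map X' ℙ) ∂(Measure.map X ℙ) := by
        rw [hXX']; exact integral_prod _ hint
    _ = ∫ ω, (∫ y, h (X ω) y ∂(Measure.map X' ℙ)) ∂ℙ := by
        rw [integral_map hX.aemeasurable hsm.aestronglyMeasurable]

lemma key_condexp {Ω : Type*} [MeasureSpace Ω] [IsProbabilityMeasure (ℙ : Measure Ω)]
    {p : ℕ} (j : Fin p) (X : Ω → Fin p → ℝ) (X' : Ω → ℝ)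
    (hX : Measurable X) (hX' : Measurable X') (hindep : IndepFun X' X ℙ)
    (F : (Fin p → ℝ) → ℝ) (hF : Measurable F) (CF : ℝ) (hCF : ∀ x, |F x| ≤ CF)
    (h : ({k : Fin p // k ≠ j} → ℝ) → ℝ → ℝ)
    (hh : Measurable (fun q : ({k : Fin p // k ≠ j} → ℝ) × ℝ => h q.1 q.2))
    (Ch : ℝ) (hCh : ∀ z y, |h z y| ≤ Ch) :
    ℙ[fun ω => F (X ω) * h (fun k : {k : Fin p // k ≠ j} => X ω (k : Fin p)) (X' ω)
        | sigmaWithout X j]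
      =ᵐ[ℙ] fun ω => (ℙ[fun ω' => F (X ω') | sigmaWithout X j]) ω
        * ∫ y, h (fun k : {k : Fin p // k ≠ j} => X ω (k : Fin p)) y ∂(Measure.map X' ℙ) := by
  set ν := Measure.map X' ℙ with hν
  haveI : IsProbabilityMeasure ν := Measure.isProbabilityMeasure_map hX'.aemeasurable
  set Z : Ω → {k : Fin p // k ≠ j} → ℝ := fun ω => fun k => X ω (k : Fin p) with hZdef
  have hZ : Measurable Z := measurable_pi_lambda _ fun k => (measurable_pi_apply _).comp hX
  have hle : sigmaWithout X j ≤ (inferInstance : MeasurableSpace Ω) := hZ.comap_le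
  haveI : IsFiniteMeasure ((ℙ : Measure Ω).trim hle) := isFiniteMeasure_trim hle
  have hZm : Measurable[sigmaWithout X j] Z := Measurable.of_comap_le le_rfl
  set H : ({k : Fin p // k ≠ j} → ℝ) → ℝ := fun z => ∫ y, h z y ∂ν with hHdef
  have hHsm : StronglyMeasurable H := hh.stronglyMeasurable.integral_prod_right'
  have hHbdd : ∀ z, |H z| ≤ Ch := by
    intro z
    have := norm_integral_le_of_norm_le_const (μ := ν) (f := fun y => h z y) (C := Ch)
      (ae_of_all _ fun y => by simpa [Real.norm_eq_abs] using hCh z y)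
    simpa [Real.norm_eq_abs] using this
  set f' := ℙ[fun ω' => F (X ω') | sigmaWithout X j] with hf'def
  have hFXint : Integrable (fun ω => F (X ω)) ℙ :=
    Integrable.mono' (integrable_const CF) (hF.comp hX).aestronglyMeasurable
      (ae_of_all _ fun ω => by simpa [Real.norm_eq_abs] using hCF (X ω))
  have main : (fun ω => f' ω * H (Z ω))
      =ᵐ[ℙ] ℙ[fun ω => F (X ω) * h (Z ω) (X' ω) | sigmaWithout X j] := by
    refine ae_eq_condExp_of_forall_setIntegral_eq hle ?_ ?_ ?_ ?_
    · -- integrable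
      refine Integrable.mono' (integrable_const (CF * Ch))
        ((hF.comp hX).mul (hh.comp (hZ.prodMk hX'))).aestronglyMeasurable
        (ae_of_all _ fun ω => ?_)
      have := mul_le_mul (hCF (X ω)) (hCh (Z ω) (X' ω)) (abs_nonneg _)
        (le_trans (abs_nonneg _) (hCF (X ω)))
      simpa [Real.norm_eq_abs, abs_mul] using this
    · -- integrable on sets
      intro s _ _
      refine Integrable.integrableOn ?_
      refine ((Integrable.bdd_mul (c := Ch) integrable_condExp
        ((hHsm.measurable.comp hZ).aestronglyMeasurable) (ae_of_all _ fun ω => ?_)).congr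
        (ae_of_all _ fun ω => mul_comm _ _))
      simpa [Real.norm_eq_abs] using hHbdd (Z ω)
    · -- set integral equality
      intro s hs _
      obtain ⟨u, hu, rfl⟩ := hs
      have hZu : MeasurableSet (Z ⁻¹' u) := hZ hu
      have hRHS : ∫ ω in Z ⁻¹' u, F (X ω) * h (Z ω) (X' ω) ∂ℙ
          = ∫ ω in Z ⁻¹' u, F (X ω) * H (Z ω) ∂ℙ := by
        have hind : Measurable (fun x : Fin p → ℝ =>
            u.indicator (fun _ => (1:ℝ)) (fun k : {k : Fin p // k ≠ j} => x (k : Fin p))) := by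
          have hr : Measurable (fun x : Fin p → ℝ =>
              (fun k : {k : Fin p // k ≠ j} => x (k : Fin p))) :=
            measurable_pi_lambda _ fun k => measurable_pi_apply _
          exact (measurable_const.indicator hu).comp hr
        have hker : Measurable (fun q : (Fin p → ℝ) × ℝ =>
            h (fun k : {k : Fin p // k ≠ j} => q.1 (k : Fin p)) q.2) := by
          have hr : Measurable (fun q : (Fin p → ℝ) × ℝ =>
              ((fun k : {k : Fin p // k ≠ j} => q.1 (k : Fin p)), q.2)) :=
            (measurable_pi_lambda _ fun k =>
              (measurable_pi_apply _).comp measurable_fst).prodMk measurable_snd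
          exact hh.comp hr
        have hcalc := calc_aux X X' hX hX' hindep
          (fun x y => (u.indicator (fun _ => (1:ℝ)) (fun k : {k : Fin p // k ≠ j} => x (k : Fin p)))
            * (F x * h (fun k : {k : Fin p // k ≠ j} => x (k : Fin p)) y))
          ((hind.comp measurable_fst).mul ((hF.comp measurable_fst).mul hker))
          (1 * (CF * Ch)) ?_
        · rw [← integral_indicator hZu, ← integral_indicator hZu]
          calc ∫ ω, (Z ⁻¹' u).indicator (fun ω' => F (X ω') * h (Z ω') (X' ω')) ω ∂ℙ
              = ∫ ω, (u.indicator (fun _ => (1:ℝ)) (Z ω)) * (F (X ω) * h (Z ω) (X' ω)) ∂ℙ := by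
                refine integral_congr_ae (ae_of_all _ fun ω => ?_)
                simp only [Set.indicator_apply, Set.mem_preimage]
                by_cases hω : Z ω ∈ u <;> simp [hω]
            _ = ∫ ω, (∫ y, (u.indicator (fun _ => (1:ℝ)) (Z ω)) * (F (X ω) * h (Z ω) y) ∂ν) ∂ℙ :=
                hcalc
            _ = ∫ ω, (u.indicator (fun _ => (1:ℝ)) (Z ω)) * (F (X ω) * H (Z ω)) ∂ℙ := by
                refine integral_congr_ae (ae_of_all _ fun ω => ?_)
                simp only [integral_const_mul, hHdef]
            _ = ∫ ω, (Z ⁻¹' u).indicator (fun ω' => F (X ω') * H (Z ω')) ω ∂ℙ := by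
                refine integral_congr_ae (ae_of_all _ fun ω => ?_)
                simp only [Set.indicator_apply, Set.mem_preimage]
                by_cases hω : Z ω ∈ u <;> simp [hω]
        · intro x y
          have h1 : |u.indicator (fun _ => (1:ℝ))
              (fun k : {k : Fin p // k ≠ j} => x (k : Fin p))| ≤ 1 := by
            by_cases hm : (fun k : {k : Fin p // k ≠ j} => x (k : Fin p)) ∈ u <;>
              simp [Set.indicator_of_mem, Set.indicator_of_notMem, hm]
          have h2 : |F x * h (fun k : {k : Fin p // k ≠ j} => x (k : Fin p)) y| ≤ CF * Ch := by
            rw [abs_mul]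
            exact mul_le_mul (hCF x) (hCh _ y) (abs_nonneg _) (le_trans (abs_nonneg _) (hCF x))
          rw [abs_mul]
          exact mul_le_mul h1 h2 (abs_nonneg _) zero_le_one
      have hLHS : ∫ ω in Z ⁻¹' u, f' ω * H (Z ω) ∂ℙ
          = ∫ ω in Z ⁻¹' u, F (X ω) * H (Z ω) ∂ℙ := by
        set w : Ω → ℝ := fun ω => u.indicator (fun _ => (1:ℝ)) (Z ω) * H (Z ω) with hwdef
        have hwsm : StronglyMeasurable[sigmaWithout X j] w := by
          refine Measurable.stronglyMeasurable ?_
          exact ((measurable_const.indicator hu).comp hZm).mul (hHsm.measurable.comp hZm)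
        have hwbdd : ∀ ω, |w ω| ≤ 1 * Ch := by
          intro ω
          rw [abs_mul]
          refine mul_le_mul ?_ (hHbdd (Z ω)) (abs_nonneg _) zero_le_one
          by_cases hm : Z ω ∈ u <;>
            simp [Set.indicator_of_mem, Set.indicator_of_notMem, hm]
        have hwFint : Integrable (w * fun ω => F (X ω)) ℙ := by
          have := Integrable.bdd_mul (c := 1 * Ch) hFXint ((hwsm.mono hle).aestronglyMeasurable)
            (ae_of_all _ fun ω => by simpa [Real.norm_eq_abs] using hwbdd ω)
          exact this
        have hmul := condExp_mul_of_stronglyMeasurable_left (m := sigmaWithout X j) (μ := ℙ)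
          hwsm hwFint hFXint
        calc ∫ ω in Z ⁻¹' u, f' ω * H (Z ω) ∂ℙ
            = ∫ ω, w ω * f' ω ∂ℙ := by
              rw [← integral_indicator hZu]
              refine integral_congr_ae (ae_of_all _ fun ω => ?_)
              simp only [Set.indicator_apply, Set.mem_preimage, hwdef]
              by_cases hω : Z ω ∈ u <;> simp [hω] <;> ring
          _ = ∫ ω, (ℙ[w * (fun ω' => F (X ω')) | sigmaWithout X j]) ω ∂ℙ := by
              refine integral_congr_ae ?_
              filter_upwards [hmul] with ω hω
              rw [hω]; rfl
          _ = ∫ ω, w ω * F (X ω) ∂ℙ := by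
              rw [integral_condExp hle]; rfl
          _ = ∫ ω in Z ⁻¹' u, F (X ω) * H (Z ω) ∂ℙ := by
              rw [← integral_indicator hZu]
              refine integral_congr_ae (ae_of_all _ fun ω => ?_)
              simp only [Set.indicator_apply, Set.mem_preimage, hwdef]
              by_cases hω : Z ω ∈ u <;> simp [hω] <;> ring
      exact hLHS.trans hRHS.symm
    · refine StronglyMeasurable.aestronglyMeasurable ?_
      exact stronglyMeasurable_condExp.mul (hHsm.comp_measurable hZm)
  exact main.symm


/-- `m(X)` and `m(X_{π_j})` are independent conditionally on `X^{(-j)}`, and the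
MDA limit decomposes as total Sobol + marginal total Sobol + cross term. -/
theorem mda_decomposition
    {Ω : Type*} [MeasureSpace Ω] [StandardBorelSpace Ω] [Nonempty Ω]
    [IsProbabilityMeasure (ℙ : Measure Ω)]
    {p : ℕ} (j : Fin p) (X : Ω → Fin p → ℝ) (X' : Ω → ℝ)
    (m : (Fin p → ℝ) → ℝ) (hmMeas : Measurable m) (hmBdd : ∃ C, ∀ x, |m x| ≤ C)
    (hL2 : MemLp (fun ω => m (X ω)) 2 ℙ)
    (hX : Measurable X) (hX' : Measurable X')
    -- `X'` is an independent copy of the `j`-th component of `X`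
    (hcopy : Measure.map X' ℙ = Measure.map (fun ω => X ω j) ℙ)
    (hindep : IndepFun X' X ℙ) :
    CondIndepFun (sigmaWithout X j)
        (Measurable.comap_le
          (measurable_pi_lambda _ fun k => (measurable_pi_apply (k : Fin p)).comp hX))
        (fun ω => m (X ω)) (fun ω => m (permuted X j X' ω)) ℙ ∧
    ∫ ω, (m (X ω) - m (permuted X j X' ω)) ^ 2 ∂ℙ
      = (∫ ω, (m (X ω) - (ℙ[fun ω' => m (X ω') | sigmaWithout X j]) ω) ^ 2 ∂ℙ)
        + (∫ ω, (m (permuted X j X' ω)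
            - (ℙ[fun ω' => m (permuted X j X' ω') | sigmaWithout X j]) ω) ^ 2 ∂ℙ)
        + (∫ ω, ((ℙ[fun ω' => m (X ω') | sigmaWithout X j]) ω
            - (ℙ[fun ω' => m (permuted X j X' ω') | sigmaWithout X j]) ω) ^ 2 ∂ℙ) := by
  obtain ⟨C, hC⟩ := hmBdd
  have hZ : Measurable (fun ω => fun k : {k : Fin p // k ≠ j} => X ω (k : Fin p)) :=
    measurable_pi_lambda _ fun k => (measurable_pi_apply _).comp hX
  have hle : sigmaWithout X j ≤ (inferInstance : MeasurableSpace Ω) := hZ.comap_le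
  haveI : IsFiniteMeasure ((ℙ : Measure Ω).trim hle) := isFiniteMeasure_trim hle
  have hcombm : Measurable (fun q : ({k : Fin p // k ≠ j} → ℝ) × ℝ => comb j q.1 q.2) :=
    measurable_comb j
  have hpermeq : ∀ ω, comb j (fun k : {k : Fin p // k ≠ j} => X ω (k : Fin p)) (X' ω)
      = permuted X j X' ω := fun ω => comb_restr j (X ω) (X' ω)
  have hfm : Measurable (fun ω => m (X ω)) := hmMeas.comp hX
  have hgm : Measurable (fun ω => m (permuted X j X' ω)) := by
    have e : (fun ω => m (permuted X j X' ω))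
        = fun ω => m (comb j (fun k : {k : Fin p // k ≠ j} => X ω (k : Fin p)) (X' ω)) :=
      funext fun ω => by rw [hpermeq]
    rw [e]
    exact (hmMeas.comp hcombm).comp (hZ.prodMk hX')
  constructor
  · -- conditional independence
    refine (condIndepFun_iff_condExp_inter_preimage_eq_mul hfm hgm).2 ?_
    intro s t hs ht
    set F : (Fin p → ℝ) → ℝ := (m ⁻¹' s).indicator (fun _ => (1:ℝ)) with hFdef
    set hB : ({k : Fin p // k ≠ j} → ℝ) → ℝ → ℝ :=
      fun z y => (m ⁻¹' t).indicator (fun _ => (1:ℝ)) (comb j z y) with hBdef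
    have hFmeas : Measurable F := measurable_const.indicator (hmMeas hs)
    have hFbdd : ∀ x, |F x| ≤ 1 := by
      intro x
      by_cases hx : x ∈ m ⁻¹' s <;> simp [hFdef, Set.indicator_apply, hx]
    have hBmeas : Measurable (fun q : ({k : Fin p // k ≠ j} → ℝ) × ℝ => hB q.1 q.2) :=
      (measurable_const.indicator (hmMeas ht)).comp hcombm
    have hBbdd : ∀ z y, |hB z y| ≤ 1 := by
      intro z y
      by_cases hx : comb j z y ∈ m ⁻¹' t <;> simp [hBdef, Set.indicator_apply, hx]
    have k1 := key_condexp j X X' hX hX' hindep F hFmeas 1 hFbdd hB hBmeas 1 hBbdd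
    have k2 := key_condexp j X X' hX hX' hindep (fun _ => (1:ℝ)) measurable_const 1
      (fun x => by simp) hB hBmeas 1 hBbdd
    simp only [one_mul] at k2
    rw [condExp_const hle] at k2
    simp only [one_mul] at k2
    have e1 : ((fun ω => m (X ω)) ⁻¹' s ∩ (fun ω => m (permuted X j X' ω)) ⁻¹' t).indicator
        (fun _ => (1:ℝ))
        = fun ω => F (X ω) * hB (fun k : {k : Fin p // k ≠ j} => X ω (k : Fin p)) (X' ω) := by
      funext ω
      simp only [Set.indicator_apply, Set.mem_inter_iff, Set.mem_preimage, hFdef, hBdef,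
        hpermeq ω]
      by_cases h1 : m (X ω) ∈ s <;> by_cases h2 : m (permuted X j X' ω) ∈ t <;>
        simp [h1, h2]
    have e2 : ((fun ω => m (X ω)) ⁻¹' s).indicator (fun _ => (1:ℝ))
        = fun ω => F (X ω) := by
      funext ω
      by_cases h1 : m (X ω) ∈ s <;> simp [Set.indicator_apply, Set.mem_preimage, hFdef, h1]
    have e3 : ((fun ω => m (permuted X j X' ω)) ⁻¹' t).indicator (fun _ => (1:ℝ))
        = fun ω => hB (fun k : {k : Fin p // k ≠ j} => X ω (k : Fin p)) (X' ω) := by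
      funext ω
      by_cases h2 : m (permuted X j X' ω) ∈ t <;>
        simp [Set.indicator_apply, Set.mem_preimage, hBdef, hpermeq ω, h2]
    rw [e1, e2, e3]
    filter_upwards [k1, k2] with ω h1 h2
    rw [h1, h2]
  · -- the decomposition
    set ν := Measure.map X' ℙ with hν
    set f' := ℙ[fun ω' => m (X ω') | sigmaWithout X j] with hf'def
    set g' := ℙ[fun ω' => m (permuted X j X' ω') | sigmaWithout X j] with hg'def
    have hfi : Integrable (fun ω => m (X ω)) ℙ :=
      Integrable.mono' (integrable_const C) hfm.aestronglyMeasurable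
        (ae_of_all _ fun ω => by simpa [Real.norm_eq_abs] using hC (X ω))
    have hgi : Integrable (fun ω => m (permuted X j X' ω)) ℙ :=
      Integrable.mono' (integrable_const C) hgm.aestronglyMeasurable
        (ae_of_all _ fun ω => by simpa [Real.norm_eq_abs] using hC _)
    -- a.e. bounds on the conditional expectations
    have hcondbd : ∀ (u : Ω → ℝ), Integrable u ℙ → (∀ ω, |u ω| ≤ C) →
        ∀ᵐ ω ∂ℙ, |((ℙ[u | sigmaWithout X j] : Ω → ℝ)) ω| ≤ C := by
      intro u hui hub
      have h1 := condExp_mono (m := sigmaWithout X j) hui (integrable_const C)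
        (ae_of_all _ fun ω => (abs_le.1 (hub ω)).2)
      have h2 := condExp_mono (m := sigmaWithout X j) (integrable_const (-C)) hui
        (ae_of_all _ fun ω => (abs_le.1 (hub ω)).1)
      rw [condExp_const hle] at h1 h2
      filter_upwards [h1, h2] with ω hω1 hω2
      exact abs_le.2 ⟨hω2, hω1⟩
    have hf'bd : ∀ᵐ ω ∂ℙ, |f' ω| ≤ C := hcondbd _ hfi (fun ω => hC (X ω))
    have hg'bd : ∀ᵐ ω ∂ℙ, |g' ω| ≤ C := hcondbd _ hgi (fun ω => hC _)
    have hf'asm : AEStronglyMeasurable f' ℙ :=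
      (stronglyMeasurable_condExp.mono hle).aestronglyMeasurable
    have hg'asm : AEStronglyMeasurable g' ℙ :=
      (stronglyMeasurable_condExp.mono hle).aestronglyMeasurable
    -- products of a.e. bounded functions are integrable
    have prodInt : ∀ (u v : Ω → ℝ), AEStronglyMeasurable u ℙ → AEStronglyMeasurable v ℙ →
        (∀ᵐ ω ∂ℙ, |u ω| ≤ C) → (∀ᵐ ω ∂ℙ, |v ω| ≤ C) →
        Integrable (fun ω => u ω * v ω) ℙ := by
      intro u v hu hv hub hvb
      refine Integrable.mono' (integrable_const (C*C)) (hu.mul hv) ?_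
      filter_upwards [hub, hvb] with ω h1 h2
      have hC0 : 0 ≤ C := le_trans (abs_nonneg _) h1
      simpa [Real.norm_eq_abs, abs_mul] using
        mul_le_mul h1 h2 (abs_nonneg _) hC0
    have hfb : ∀ᵐ ω ∂ℙ, |m (X ω)| ≤ C := ae_of_all _ fun ω => hC (X ω)
    have hgb : ∀ᵐ ω ∂ℙ, |m (permuted X j X' ω)| ≤ C := ae_of_all _ fun ω => hC _
    have Iff : Integrable (fun ω => m (X ω) * m (X ω)) ℙ :=
      prodInt _ _ hfm.aestronglyMeasurable hfm.aestronglyMeasurable hfb hfb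
    have Ifg : Integrable (fun ω => m (X ω) * m (permuted X j X' ω)) ℙ :=
      prodInt _ _ hfm.aestronglyMeasurable hgm.aestronglyMeasurable hfb hgb
    have Igg : Integrable (fun ω => m (permuted X j X' ω) * m (permuted X j X' ω)) ℙ :=
      prodInt _ _ hgm.aestronglyMeasurable hgm.aestronglyMeasurable hgb hgb
    have Iff' : Integrable (fun ω => m (X ω) * f' ω) ℙ :=
      prodInt _ _ hfm.aestronglyMeasurable hf'asm hfb hf'bd
    have If'f' : Integrable (fun ω => f' ω * f' ω) ℙ := prodInt _ _ hf'asm hf'asm hf'bd hf'bd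
    have Igg' : Integrable (fun ω => m (permuted X j X' ω) * g' ω) ℙ :=
      prodInt _ _ hgm.aestronglyMeasurable hg'asm hgb hg'bd
    have Ig'g' : Integrable (fun ω => g' ω * g' ω) ℙ := prodInt _ _ hg'asm hg'asm hg'bd hg'bd
    have If'g' : Integrable (fun ω => f' ω * g' ω) ℙ := prodInt _ _ hf'asm hg'asm hf'bd hg'bd
    -- pull-out property
    have pull : ∀ (w u : Ω → ℝ), StronglyMeasurable[sigmaWithout X j] w → Integrable u ℙ →
        Integrable (fun ω => w ω * u ω) ℙ →
        ∫ ω, w ω * u ω ∂ℙ = ∫ ω, w ω * ((ℙ[u | sigmaWithout X j] : Ω → ℝ)) ω ∂ℙ := by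
      intro w u hw hu hwu
      have hmul := condExp_mul_of_stronglyMeasurable_left (m := sigmaWithout X j) (μ := ℙ)
        hw (by exact hwu) hu
      calc ∫ ω, w ω * u ω ∂ℙ
          = ∫ ω, (ℙ[(w * u : Ω → ℝ) | sigmaWithout X j]) ω ∂ℙ := (integral_condExp hle).symm
        _ = ∫ ω, (w * (ℙ[u | sigmaWithout X j] : Ω → ℝ)) ω ∂ℙ := integral_congr_ae hmul
        _ = ∫ ω, w ω * ((ℙ[u | sigmaWithout X j] : Ω → ℝ)) ω ∂ℙ := rfl
    have p1 : ∫ ω, m (X ω) * f' ω ∂ℙ = ∫ ω, f' ω * f' ω ∂ℙ := by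
      calc ∫ ω, m (X ω) * f' ω ∂ℙ = ∫ ω, f' ω * m (X ω) ∂ℙ :=
            integral_congr_ae (ae_of_all _ fun ω => mul_comm _ _)
        _ = ∫ ω, f' ω * f' ω ∂ℙ := pull f' _ stronglyMeasurable_condExp hfi
            (Iff'.congr (ae_of_all _ fun ω => mul_comm _ _))
    have p2 : ∫ ω, m (permuted X j X' ω) * g' ω ∂ℙ = ∫ ω, g' ω * g' ω ∂ℙ := by
      calc ∫ ω, m (permuted X j X' ω) * g' ω ∂ℙ = ∫ ω, g' ω * m (permuted X j X' ω) ∂ℙ :=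
            integral_congr_ae (ae_of_all _ fun ω => mul_comm _ _)
        _ = ∫ ω, g' ω * g' ω ∂ℙ := pull g' _ stronglyMeasurable_condExp hgi
            (Igg'.congr (ae_of_all _ fun ω => mul_comm _ _))
    -- the key identity : ∫ f g = ∫ f' g'
    have hkey : ∫ ω, m (X ω) * m (permuted X j X' ω) ∂ℙ = ∫ ω, f' ω * g' ω ∂ℙ := by
      set hG : ({k : Fin p // k ≠ j} → ℝ) → ℝ → ℝ := fun z y => m (comb j z y) with hGdef
      have hGmeas : Measurable (fun q : ({k : Fin p // k ≠ j} → ℝ) × ℝ => hG q.1 q.2) :=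
        hmMeas.comp hcombm
      have hGbd : ∀ z y, |hG z y| ≤ C := fun z y => hC _
      have k1 := key_condexp j X X' hX hX' hindep m hmMeas C hC hG hGmeas C hGbd
      have k2 := key_condexp j X X' hX hX' hindep (fun _ => (1:ℝ)) measurable_const 1
        (fun x => by simp) hG hGmeas C hGbd
      simp only [one_mul] at k2
      rw [condExp_const hle] at k2
      simp only [one_mul] at k2
      have esub : (fun ω => m (X ω)
          * hG (fun k : {k : Fin p // k ≠ j} => X ω (k : Fin p)) (X' ω))
          = fun ω => m (X ω) * m (permuted X j X' ω) := by
        funext ω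
        simp only [hGdef, hpermeq ω]
      have esub2 : (fun ω => hG (fun k : {k : Fin p // k ≠ j} => X ω (k : Fin p)) (X' ω))
          = fun ω => m (permuted X j X' ω) := by
        funext ω
        simp only [hGdef, hpermeq ω]
      rw [esub] at k1
      rw [esub2] at k2
      -- k2 : g' =ᵐ fun ω => ∫ y, hG (...) y ∂ν  (in symm form)
      calc ∫ ω, m (X ω) * m (permuted X j X' ω) ∂ℙ
          = ∫ ω, (ℙ[fun ω' => m (X ω') * m (permuted X j X' ω') | sigmaWithout X j]) ω ∂ℙ :=
            (integral_condExp hle).symm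
        _ = ∫ ω, f' ω * g' ω ∂ℙ := by
            refine integral_congr_ae ?_
            filter_upwards [k1, k2] with ω h1 h2
            rw [h1, ← h2]
    -- expansion of squares
    have expand : ∀ u v : Ω → ℝ, Integrable (fun ω => u ω * u ω) ℙ →
        Integrable (fun ω => u ω * v ω) ℙ → Integrable (fun ω => v ω * v ω) ℙ →
        ∫ ω, (u ω - v ω)^2 ∂ℙ
          = ∫ ω, u ω * u ω ∂ℙ - 2 * ∫ ω, u ω * v ω ∂ℙ + ∫ ω, v ω * v ω ∂ℙ := by
      intro u v h1 h2 h3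
      have e : ∀ ω, (u ω - v ω)^2 = (u ω * u ω - 2*(u ω * v ω)) + v ω * v ω := by
        intro ω; ring
      have h12 : Integrable (fun ω => u ω * u ω - 2*(u ω * v ω)) ℙ :=
        (h1.sub (h2.const_mul 2)).congr (ae_of_all _ fun ω => rfl)
      rw [integral_congr_ae (ae_of_all _ e), integral_add h12 h3,
        integral_sub h1 (h2.const_mul 2), integral_const_mul]
    have E1 : ∫ ω, (m (X ω) - m (permuted X j X' ω))^2 ∂ℙ
        = ∫ ω, m (X ω) * m (X ω) ∂ℙ - 2 * ∫ ω, m (X ω) * m (permuted X j X' ω) ∂ℙ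
          + ∫ ω, m (permuted X j X' ω) * m (permuted X j X' ω) ∂ℙ :=
      expand _ _ Iff Ifg Igg
    have E2 : ∫ ω, (m (X ω) - f' ω)^2 ∂ℙ
        = ∫ ω, m (X ω) * m (X ω) ∂ℙ - 2 * ∫ ω, m (X ω) * f' ω ∂ℙ
          + ∫ ω, f' ω * f' ω ∂ℙ :=
      expand _ _ Iff Iff' If'f'
    have E3 : ∫ ω, (m (permuted X j X' ω) - g' ω)^2 ∂ℙ
        = ∫ ω, m (permuted X j X' ω) * m (permuted X j X' ω) ∂ℙ
          - 2 * ∫ ω, m (permuted X j X' ω) * g' ω ∂ℙ + ∫ ω, g' ω * g' ω ∂ℙ :=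
      expand _ _ Igg Igg' Ig'g'
    have E4 : ∫ ω, (f' ω - g' ω)^2 ∂ℙ
        = ∫ ω, f' ω * f' ω ∂ℙ - 2 * ∫ ω, f' ω * g' ω ∂ℙ + ∫ ω, g' ω * g' ω ∂ℙ :=
      expand _ _ If'f' If'g' Ig'g'
    rw [E1, E2, E3, E4]
    linarith [p1, p2, hkey]
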